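/- arXiv:1706.09880 — 6 statements merged into one kernel-verified Lean document; each statement's English description precedes it below -/
import Mathlib

section
/- Let 0 < L ≤ U, let f ∈ F_{L,U} with unique minimizer x₀ (i.e., f(x₀) = min_x f(x)), and let α ∈ ℝ be a step size such that q(α) := max{|1 − U α|, |1 − L α|} < 1. Then, starting from an arbitrary initial guess x⁽⁰⁾ ∈ ℝⁿ, the gradient descent iterates x⁽ᵏ⁺¹⁾ = x⁽ᵏ⁾ − α ∇f(x⁽ᵏ⁾) satisfy ‖x⁽ᵏ⁾ − x₀‖ ≤ q(α)ᵏ ‖x⁽⁰⁾ − x₀‖ for every k ∈ ℕ. -/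
open InnerProductSpace

lemma selfadj_norm_bound {E : Type*} [NormedAddCommGroup E] [InnerProductSpace ℝ E]
    (B : E →L[ℝ] E) (hsym : ∀ v w, ⟪B v, w⟫_ℝ = ⟪B w, v⟫_ℝ)
    {q : ℝ} (hq0 : 0 ≤ q) (hB : ∀ v, |⟪B v, v⟫_ℝ| ≤ q * ‖v‖ ^ 2) :
    ∀ v, ‖B v‖ ≤ q * ‖v‖ := by
  have key : ∀ v w : E, ⟪B v, w⟫_ℝ ≤ q / 2 * (‖v‖ ^ 2 + ‖w‖ ^ 2) := by
    intro v w
    have h4 : 4 * ⟪B v, w⟫_ℝ = ⟪B (v + w), v + w⟫_ℝ - ⟪B (v - w), v - w⟫_ℝ := by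
      simp only [map_add, map_sub, inner_add_left, inner_add_right, inner_sub_left,
        inner_sub_right]
      linarith [hsym v w]
    have hp : ‖v + w‖ ^ 2 + ‖v - w‖ ^ 2 = 2 * (‖v‖ ^ 2 + ‖w‖ ^ 2) := by
      have := norm_add_sq_real v w
      have := norm_sub_sq_real v w
      linarith
    have h1 := (abs_le.1 (hB (v + w))).2
    have h2 := (abs_le.1 (hB (v - w))).1
    nlinarith
  intro v
  rcases eq_or_ne (B v) 0 with h | h
  · rw [h, norm_zero]; positivity
  · have hw := key v ((‖v‖ / ‖B v‖) • B v)
    rw [real_inner_smul_right, real_inner_self_eq_norm_sq, norm_smul, Real.norm_eq_abs,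
      abs_div, abs_norm, abs_norm] at hw
    have hBv : 0 < ‖B v‖ := norm_pos_iff.2 h
    rcases eq_or_ne v 0 with hv | hv
    · simp [hv] at h
    · have hv0 : 0 < ‖v‖ := norm_pos_iff.2 hv
      have : ‖v‖ / ‖B v‖ * ‖B v‖ ^ 2 = ‖v‖ * ‖B v‖ := by field_simp
      rw [this] at hw
      have h2 : (‖v‖ / ‖B v‖ * ‖B v‖) ^ 2 = ‖v‖ ^ 2 := by field_simp
      rw [h2] at hw
      nlinarith

lemma step_arith {L U α s t q : ℝ} (hs : 0 ≤ s) (hl : L * s ≤ t) (hu : t ≤ U * s)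
    (hqU : |1 - U * α| ≤ q) (hqL : |1 - L * α| ≤ q) : |s - α * t| ≤ q * s := by
  have h1 := abs_le.1 hqU
  have h2 := abs_le.1 hqL
  rw [abs_le]
  rcases le_or_gt 0 α with hα | hα
  · constructor <;> nlinarith [mul_le_mul_of_nonneg_left hl hα, mul_le_mul_of_nonneg_left hu hα,
      mul_le_mul_of_nonneg_right h1.1 hs, mul_le_mul_of_nonneg_right h2.2 hs]
  · have hα' : 0 ≤ -α := by linarith
    constructor <;> nlinarith [mul_le_mul_of_nonneg_left hl hα', mul_le_mul_of_nonneg_left hu hα',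
      mul_le_mul_of_nonneg_right h1.2 hs, mul_le_mul_of_nonneg_right h2.1 hs]


/-- `f ∈ F_{L,U}`: twice continuously differentiable, convex, and every eigenvalue of the
(symmetric) Hessian `∇²f(x)` lies in `[L, U]`, expressed via the quadratic form
`L ‖v‖² ≤ vᵀ ∇²f(x) v ≤ U ‖v‖²`. -/
def MemFLU {n : ℕ} (L U : ℝ) (f : EuclideanSpace ℝ (Fin n) → ℝ) : Prop :=
  ContDiff ℝ 2 f ∧ ConvexOn ℝ Set.univ f ∧
    ∀ x v : EuclideanSpace ℝ (Fin n),
      L * ‖v‖ ^ 2 ≤ iteratedFDeriv ℝ 2 f x ![v, v] ∧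
      iteratedFDeriv ℝ 2 f x ![v, v] ≤ U * ‖v‖ ^ 2

set_option maxHeartbeats 1000000 in
/-- For `f ∈ F_{L,U}` with unique minimizer `x₀` and a step size `α` with
`q(α) = max {|1 − Uα|, |1 − Lα|} < 1`, gradient descent `x⁽ᵏ⁺¹⁾ = x⁽ᵏ⁾ − α ∇f(x⁽ᵏ⁾)`
satisfies `‖x⁽ᵏ⁾ − x₀‖ ≤ q(α)ᵏ ‖x⁽⁰⁾ − x₀‖`. -/
theorem gradient_descent_linear_rate {n : ℕ} (L U : ℝ) (hL : 0 < L) (hLU : L ≤ U)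
    (f : EuclideanSpace ℝ (Fin n) → ℝ) (hf : MemFLU L U f)
    (x₀ : EuclideanSpace ℝ (Fin n))
    (hmin : ∀ y, f x₀ ≤ f y)
    (huniq : ∀ y, (∀ z, f y ≤ f z) → y = x₀)
    (α : ℝ) (hq : max |1 - U * α| |1 - L * α| < 1)
    (x : ℕ → EuclideanSpace ℝ (Fin n))
    (hx : ∀ k, x (k + 1) = x k - α • gradient f (x k)) :
    ∀ k, ‖x k - x₀‖ ≤ (max |1 - U * α| |1 - L * α|) ^ k * ‖x 0 - x₀‖ := by
  obtain ⟨hC, hconv, hH⟩ := hf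
  set q := max |1 - U * α| |1 - L * α| with hqdef
  have hq0 : 0 ≤ q := le_trans (abs_nonneg _) (le_max_left _ _)
  have hqU : |1 - U * α| ≤ q := le_max_left _ _
  have hqL : |1 - L * α| ≤ q := le_max_right _ _
  have hdiff : Differentiable ℝ f := hC.differentiable (by norm_num)
  have hf1 : ContDiff ℝ 1 (fderiv ℝ f) := hC.fderiv_right (by norm_num)
  have hdiff' : Differentiable ℝ (fderiv ℝ f) := hf1.differentiable (by norm_num)
  set f'' := fun y => fderiv ℝ (fderiv ℝ f) y with hf''
  have hsymm : ∀ y v w, f'' y v w = f'' y w v := fun y v w =>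
    second_derivative_symmetric (fun z => (hdiff z).hasFDerivAt) (hdiff' y).hasFDerivAt v w
  have hQ : ∀ (y v : EuclideanSpace ℝ (Fin n)), L * ‖v‖ ^ 2 ≤ f'' y v v ∧ f'' y v v ≤ U * ‖v‖ ^ 2 := by
    intro y v
    have := hH y v
    rwa [iteratedFDeriv_two_apply, Matrix.cons_val_zero, Matrix.cons_val_one,
      Matrix.cons_val_zero] at this
  -- the derivative of the gradient map
  set J : StrongDual ℝ (EuclideanSpace ℝ (Fin n)) →L[ℝ] EuclideanSpace ℝ (Fin n) :=
    (toDual ℝ (EuclideanSpace ℝ (Fin n))).symm.toContinuousLinearEquiv.toContinuousLinearMap with hJ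
  have hJapp : ∀ φ : StrongDual ℝ (EuclideanSpace ℝ (Fin n)), J φ = (toDual ℝ (EuclideanSpace ℝ (Fin n))).symm φ := fun φ => rfl
  set G : EuclideanSpace ℝ (Fin n) → EuclideanSpace ℝ (Fin n) := fun y => y - α • gradient f y with hG
  set B : EuclideanSpace ℝ (Fin n) → EuclideanSpace ℝ (Fin n) →L[ℝ] EuclideanSpace ℝ (Fin n) :=
    fun y => ContinuousLinearMap.id ℝ (EuclideanSpace ℝ (Fin n)) - α • (J.comp (f'' y)) with hB
  have hGd : ∀ y, HasFDerivAt G (B y) y := by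
    intro y
    have h1 : HasFDerivAt (fun z => gradient f z) (J.comp (f'' y)) y := by
      have := J.hasFDerivAt.comp y (hdiff' y).hasFDerivAt
      exact this
    exact (hasFDerivAt_id y).sub (h1.const_smul α)
  have hBapp : ∀ y v w, ⟪B y v, w⟫_ℝ = ⟪v, w⟫_ℝ - α * (f'' y v w) := by
    intro y v w
    simp only [hB, ContinuousLinearMap.sub_apply, ContinuousLinearMap.id_apply,
      ContinuousLinearMap.smul_apply, ContinuousLinearMap.comp_apply,
      inner_sub_left, real_inner_smul_left]
    rw [hJapp, toDual_symm_apply]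
  have hBsym : ∀ y v w, ⟪B y v, w⟫_ℝ = ⟪B y w, v⟫_ℝ := by
    intro y v w
    rw [hBapp, hBapp, hsymm y v w, real_inner_comm]
  have hBq : ∀ y v, |⟪B y v, v⟫_ℝ| ≤ q * ‖v‖ ^ 2 := by
    intro y v
    rw [hBapp, real_inner_self_eq_norm_sq]
    obtain ⟨hl, hu⟩ := hQ y v
    exact step_arith (sq_nonneg _) hl hu hqU hqL
  have hBnorm : ∀ y, ‖B y‖ ≤ q := fun y =>
    ContinuousLinearMap.opNorm_le_bound _ hq0 (selfadj_norm_bound (B y) (hBsym y) hq0 (hBq y))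
  have hgrad0 : gradient f x₀ = 0 := by
    have hloc : IsLocalMin f x₀ := Filter.Eventually.of_forall hmin
    have := hloc.fderiv_eq_zero
    simp [gradient, this]
  have hGx₀ : G x₀ = x₀ := by simp [hG, hgrad0]
  have hstep : ∀ y : EuclideanSpace ℝ (Fin n), ‖G y - x₀‖ ≤ q * ‖y - x₀‖ := by
    intro y
    have := convex_univ.norm_image_sub_le_of_norm_hasFDerivWithin_le
      (f := G) (f' := B) (C := q)
      (fun z _ => (hGd z).hasFDerivWithinAt) (fun z _ => hBnorm z)
      (Set.mem_univ x₀) (Set.mem_univ y)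
    rwa [hGx₀] at this
  intro k
  induction k with
  | zero => simp
  | succ k ih =>
    have h1 : ‖x (k + 1) - x₀‖ ≤ q * ‖x k - x₀‖ := by
      rw [hx k]; exact hstep (x k)
    calc ‖x (k + 1) - x₀‖ ≤ q * ‖x k - x₀‖ := h1
      _ ≤ q * (q ^ k * ‖x 0 - x₀‖) := mul_le_mul_of_nonneg_left ih hq0
      _ = q ^ (k + 1) * ‖x 0 - x₀‖ := by ring
end

section
/- Let 0 < L ≤ U with condition number κ := U/L, and let f ∈ F_{L,U} with unique minimizer x₀. Starting from an arbitrary initial guess x⁽⁰⁾ ∈ ℝⁿ, the gradient descent iterates with optimal step size α* = 2/(L+U), defined by x⁽ᵏ⁺¹⁾ = x⁽ᵏ⁾ − α* ∇f(x⁽ᵏ⁾), satisfy ‖x⁽ᵏ⁾ − x₀‖ ≤ ((κ − 1)/(κ + 1))ᵏ ‖x⁽⁰⁾ − x₀‖ for every k ∈ ℕ. -/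
open scoped RealInnerProductSpace

/-- Pointwise bound `|⟪u,w⟫ - α B w u| ≤ ρ ‖u‖ ‖w‖` for a symmetric bilinear form with
spectrum in `[L,U]`, `α = 2/(L+U)`, `ρ = (U-L)/(L+U)`. -/
lemma bilin_contraction_bound {E : Type*} [NormedAddCommGroup E] [InnerProductSpace ℝ E]
    (B : E →L[ℝ] E →L[ℝ] ℝ) (Bsymm : ∀ v w : E, B v w = B w v)
    {L U : ℝ} (hL : 0 < L) (hLU : L ≤ U)
    (hlow : ∀ v : E, L * ‖v‖ ^ 2 ≤ B v v) (hhigh : ∀ v : E, B v v ≤ U * ‖v‖ ^ 2)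
    (u w : E) :
    |⟪u, w⟫ - (2 / (L + U)) * B w u| ≤ (U - L) / (L + U) * (‖u‖ * ‖w‖) := by
  have hLU0 : 0 < L + U := by linarith
  set α : ℝ := 2 / (L + U) with hα
  set ρ : ℝ := (U - L) / (L + U) with hρ
  have hαpos : 0 < α := by positivity
  have hρ0 : 0 ≤ ρ := div_nonneg (by linarith) (by linarith)
  have h1 : (1 : ℝ) - α * L = ρ := by rw [hα, hρ]; field_simp; ring
  have h2 : (1 : ℝ) - α * U = -ρ := by rw [hα, hρ]; field_simp; ring
  -- quadratic form bound
  have hQ : ∀ v : E, |‖v‖ ^ 2 - α * B v v| ≤ ρ * ‖v‖ ^ 2 := by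
    intro v
    rw [abs_le]
    constructor
    · have := hhigh v
      nlinarith [sq_nonneg ‖v‖]
    · have := hlow v
      nlinarith [sq_nonneg ‖v‖]
  -- polarization bound
  have hS : ∀ u w : E, |⟪u, w⟫ - α * B w u| ≤ ρ / 2 * (‖u‖ ^ 2 + ‖w‖ ^ 2) := by
    intro u w
    have hpol : ⟪u, w⟫ - α * B w u =
        ((‖u + w‖ ^ 2 - α * B (u + w) (u + w)) - (‖u - w‖ ^ 2 - α * B (u - w) (u - w))) / 4 := by
      have e1 : ‖u + w‖ ^ 2 = ‖u‖ ^ 2 + 2 * ⟪u, w⟫ + ‖w‖ ^ 2 := by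
        rw [← real_inner_self_eq_norm_sq, ← real_inner_self_eq_norm_sq,
          ← real_inner_self_eq_norm_sq, inner_add_add_self, real_inner_comm w u]
        ring
      have e2 : ‖u - w‖ ^ 2 = ‖u‖ ^ 2 - 2 * ⟪u, w⟫ + ‖w‖ ^ 2 := by
        rw [← real_inner_self_eq_norm_sq, ← real_inner_self_eq_norm_sq,
          ← real_inner_self_eq_norm_sq, inner_sub_sub_self, real_inner_comm w u]
        ring
      have e3 : B (u + w) (u + w) = B u u + B u w + B w u + B w w := by
        simp [map_add, ContinuousLinearMap.add_apply]; ring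
      have e4 : B (u - w) (u - w) = B u u - B u w - B w u + B w w := by
        simp [map_sub, ContinuousLinearMap.sub_apply]; ring
      rw [e1, e2, e3, e4, Bsymm u w]; ring
    have hpar : ‖u + w‖ ^ 2 + ‖u - w‖ ^ 2 = 2 * (‖u‖ ^ 2 + ‖w‖ ^ 2) := by
      have := parallelogram_law_with_norm ℝ u w
      nlinarith [this]
    have h3 : |(‖u + w‖ ^ 2 - α * B (u + w) (u + w)) - (‖u - w‖ ^ 2 - α * B (u - w) (u - w))|
        ≤ ρ * ‖u + w‖ ^ 2 + ρ * ‖u - w‖ ^ 2 :=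
      (abs_sub _ _).trans (add_le_add (hQ _) (hQ _))
    rw [hpol]
    calc |((‖u + w‖ ^ 2 - α * B (u + w) (u + w)) - (‖u - w‖ ^ 2 - α * B (u - w) (u - w))) / 4|
        = |(‖u + w‖ ^ 2 - α * B (u + w) (u + w)) - (‖u - w‖ ^ 2 - α * B (u - w) (u - w))| / 4 := by
          rw [abs_div]; norm_num
      _ ≤ (ρ * ‖u + w‖ ^ 2 + ρ * ‖u - w‖ ^ 2) / 4 := by linarith
      _ = ρ * (‖u + w‖ ^ 2 + ‖u - w‖ ^ 2) / 4 := by ring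
      _ = ρ / 2 * (‖u‖ ^ 2 + ‖w‖ ^ 2) := by rw [hpar]; ring
  -- scaling
  rcases eq_or_ne u 0 with rfl | hu
  · simp
  rcases eq_or_ne w 0 with rfl | hw
  · simp
  have hun : 0 < ‖u‖ := norm_pos_iff.mpr hu
  have hwn : 0 < ‖w‖ := norm_pos_iff.mpr hw
  set t : ℝ := Real.sqrt (‖w‖ / ‖u‖) with ht
  have htpos : 0 < t := Real.sqrt_pos.mpr (by positivity)
  have ht2 : t ^ 2 = ‖w‖ / ‖u‖ := Real.sq_sqrt (by positivity)
  have key := hS (t • u) (t⁻¹ • w)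
  have einner : ⟪t • u, t⁻¹ • w⟫ = ⟪u, w⟫ := by
    rw [real_inner_smul_left, real_inner_smul_right]
    field_simp
  have eB : B (t⁻¹ • w) (t • u) = B w u := by
    rw [map_smul]
    simp only [ContinuousLinearMap.smul_apply, ContinuousLinearMap.map_smul, smul_eq_mul]
    field_simp
  have enu : ‖t • u‖ ^ 2 = ‖u‖ * ‖w‖ := by
    rw [norm_smul, mul_pow, Real.norm_eq_abs, sq_abs, ht2]
    field_simp
  have enw : ‖t⁻¹ • w‖ ^ 2 = ‖u‖ * ‖w‖ := by
    rw [norm_smul, mul_pow, Real.norm_eq_abs, sq_abs, inv_pow, ht2]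
    field_simp
  rw [einner, eB, enu, enw] at key
  calc |⟪u, w⟫ - α * B w u| ≤ ρ / 2 * (‖u‖ * ‖w‖ + ‖u‖ * ‖w‖) := key
    _ = ρ * (‖u‖ * ‖w‖) := by ring

/-- One-step contraction for the gradient map. -/
lemma gradient_step_contract {n : ℕ} {L U : ℝ} (hL : 0 < L) (hLU : L ≤ U)
    {f : EuclideanSpace ℝ (Fin n) → ℝ} (hf : MemFLU L U f)
    (y z : EuclideanSpace ℝ (Fin n)) :
    ‖(z - y) - (2 / (L + U)) • (gradient f z - gradient f y)‖
      ≤ (U - L) / (L + U) * ‖z - y‖ := by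
  obtain ⟨hsm, _, hspec⟩ := hf
  have hLU0 : 0 < L + U := by linarith
  set α : ℝ := 2 / (L + U) with hα
  set ρ : ℝ := (U - L) / (L + U) with hρ
  have hρ0 : 0 ≤ ρ := div_nonneg (by linarith) (by linarith)
  set w : EuclideanSpace ℝ (Fin n) := z - y with hwdef
  set u : EuclideanSpace ℝ (Fin n) := (z - y) - α • (gradient f z - gradient f y) with hudef
  have hdf' : Differentiable ℝ (fderiv ℝ f) :=
    (hsm.fderiv_right (m := 1) (by norm_num)).differentiable one_ne_zero
  have hgradinner : ∀ (p v : EuclideanSpace ℝ (Fin n)), ⟪gradient f p, v⟫ = fderiv ℝ f p v :=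
    fun p v => InnerProductSpace.toDual_symm_apply
  have hBbound : ∀ p : EuclideanSpace ℝ (Fin n),
      ∀ v, L * ‖v‖ ^ 2 ≤ fderiv ℝ (fderiv ℝ f) p v v ∧
        fderiv ℝ (fderiv ℝ f) p v v ≤ U * ‖v‖ ^ 2 := by
    intro p v
    have := hspec p v
    rwa [show iteratedFDeriv ℝ 2 f p ![v, v] = fderiv ℝ (fderiv ℝ f) p v v by
      rw [iteratedFDeriv_two_apply]; rfl] at this
  have hBsymm : ∀ p v w' : EuclideanSpace ℝ (Fin n),
      fderiv ℝ (fderiv ℝ f) p v w' = fderiv ℝ (fderiv ℝ f) p w' v :=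
    fun p => hsm.contDiffAt.isSymmSndFDerivAt (by norm_num)
  set h : ℝ → ℝ := fun t => t * ⟪u, w⟫ - α * (fderiv ℝ f (y + t • w) u - fderiv ℝ f y u)
    with hhdef
  have hderiv : ∀ t : ℝ, HasDerivAt h
      (⟪u, w⟫ - α * (fderiv ℝ (fderiv ℝ f) (y + t • w) w u)) t := by
    intro t
    have hc : HasDerivAt (fun t : ℝ => y + t • w) w t := by
      have := ((hasDerivAt_id t).smul_const w).const_add y
      simpa using this
    have hF : HasDerivAt (fun t : ℝ => fderiv ℝ f (y + t • w))
        ((fderiv ℝ (fderiv ℝ f) (y + t • w)) w) t :=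
      (hdf' _).hasFDerivAt.comp_hasDerivAt t hc
    have hFu : HasDerivAt (fun t : ℝ => fderiv ℝ f (y + t • w) u)
        ((fderiv ℝ (fderiv ℝ f) (y + t • w)) w u) t := by
      have := hF.clm_apply (hasDerivAt_const t u)
      simpa using this
    have h1 : HasDerivAt (fun t : ℝ => t * ⟪u, w⟫) ⟪u, w⟫ t := by
      simpa using (hasDerivAt_id t).mul_const ⟪u, w⟫
    have h2 := ((hFu.sub_const (fderiv ℝ f y u)).const_mul α)
    exact h1.sub h2
  have hbound : ∀ t : ℝ, |⟪u, w⟫ - α * (fderiv ℝ (fderiv ℝ f) (y + t • w) w u)|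
      ≤ ρ * (‖u‖ * ‖w‖) := by
    intro t
    exact bilin_contraction_bound (fderiv ℝ (fderiv ℝ f) (y + t • w))
      (hBsymm _) hL hLU (fun v => (hBbound _ v).1) (fun v => (hBbound _ v).2) u w
  have hmv : ‖h 1 - h 0‖ ≤ ρ * (‖u‖ * ‖w‖) * (1 - 0) := by
    apply norm_image_sub_le_of_norm_deriv_le_segment'
      (f' := fun t => ⟪u, w⟫ - α * (fderiv ℝ (fderiv ℝ f) (y + t • w) w u))
      (fun t _ => (hderiv t).hasDerivWithinAt)
      (fun t _ => by simpa [Real.norm_eq_abs] using hbound t)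
    exact ⟨zero_le_one, le_refl 1⟩
  have hval : h 1 - h 0 = ‖u‖ ^ 2 := by
    have hz : y + (1 : ℝ) • w = z := by
      rw [one_smul, hwdef]; abel
    have hiuu : ⟪u, u⟫ = ⟪u, w⟫ - α * (fderiv ℝ f z u - fderiv ℝ f y u) := by
      have hG : ⟪u, α • (gradient f z - gradient f y)⟫
          = α * (fderiv ℝ f z u - fderiv ℝ f y u) := by
        rw [real_inner_smul_right, real_inner_comm, inner_sub_left, hgradinner, hgradinner]
      nth_rewrite 2 [show u = w - α • (gradient f z - gradient f y) from by rw [hudef, hwdef]]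
      rw [inner_sub_right, hG]
    rw [hhdef]
    simp only [hz, one_mul, zero_mul, zero_add, zero_smul, add_zero]
    rw [← real_inner_self_eq_norm_sq, hiuu]
    ring
  rw [hval] at hmv
  have hmv' : ‖u‖ ^ 2 ≤ ρ * (‖u‖ * ‖w‖) := by
    rw [Real.norm_eq_abs, abs_of_nonneg (by positivity)] at hmv
    linarith
  rcases eq_or_lt_of_le (norm_nonneg u) with h0 | h0
  · rw [← h0]
    positivity
  · nlinarith [norm_nonneg w]

/-- For `f ∈ F_{L,U}` with unique minimizer `x₀`, condition number
`κ = U/L`, gradient descent with the optimal step size `α* = 2/(L+U)` satisfies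
`‖x⁽ᵏ⁾ − x₀‖ ≤ ((κ−1)/(κ+1))ᵏ ‖x⁽⁰⁾ − x₀‖`. -/
theorem gradient_descent_optimal_rate {n : ℕ} (L U : ℝ) (hL : 0 < L) (hLU : L ≤ U)
    (κ : ℝ) (hκ : κ = U / L)
    (f : EuclideanSpace ℝ (Fin n) → ℝ) (hf : MemFLU L U f)
    (x₀ : EuclideanSpace ℝ (Fin n))
    (hmin : ∀ y, f x₀ ≤ f y)
    (huniq : ∀ y, (∀ z, f y ≤ f z) → y = x₀)
    (x : ℕ → EuclideanSpace ℝ (Fin n))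
    (hx : ∀ k, x (k + 1) = x k - (2 / (L + U)) • gradient f (x k)) :
    ∀ k, ‖x k - x₀‖ ≤ ((κ - 1) / (κ + 1)) ^ k * ‖x 0 - x₀‖ := by
  have hLU0 : 0 < L + U := by linarith
  have hρκ : (κ - 1) / (κ + 1) = (U - L) / (L + U) := by
    have e1 : U / L - 1 = (U - L) / L := by field_simp
    have e2 : U / L + 1 = (U + L) / L := by field_simp
    rw [hκ, e1, e2, div_div_div_cancel_right₀ hL.ne', add_comm U L]
  set ρ : ℝ := (U - L) / (L + U) with hρ
  have hρ0 : 0 ≤ ρ := div_nonneg (by linarith) (by linarith)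
  -- gradient vanishes at the minimizer
  have hloc : IsLocalMin f x₀ := Filter.Eventually.of_forall fun y => hmin y
  have hgrad0 : gradient f x₀ = 0 := by
    rw [gradient, hloc.fderiv_eq_zero, map_zero]
  rw [hρκ]
  intro k
  induction k with
  | zero => simp
  | succ k ih =>
      have hstep := gradient_step_contract hL hLU ⟨hf.1, hf.2.1, hf.2.2⟩ x₀ (x k)
      rw [hgrad0, sub_zero] at hstep
      have hrw : x (k + 1) - x₀ = (x k - x₀) - (2 / (L + U)) • gradient f (x k) := by
        rw [hx k]; abel
      calc ‖x (k + 1) - x₀‖ = ‖(x k - x₀) - (2 / (L + U)) • gradient f (x k)‖ := by rw [hrw]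
        _ ≤ ρ * ‖x k - x₀‖ := hstep
        _ ≤ ρ * (ρ ^ k * ‖x 0 - x₀‖) := by
            exact mul_le_mul_of_nonneg_left ih hρ0
        _ = ρ ^ (k + 1) * ‖x 0 - x₀‖ := by ring
end

section
/- Let 0 < L < U with κ := U/L > 1, and let f : ℝⁿ → ℝ be the quadratic function f(x) = (1/2) xᵀ Q x + qᵀ x + c with Q ∈ ℝⁿˣⁿ symmetric positive definite whose eigenvalues all lie in [L, U], q ∈ ℝⁿ and c ∈ ℝ; let x₀ be the unique minimizer of f. Define the heavy-ball parameters α̃ := 4/(√U + √L)² and β̃ := ((√U − √L)/(√U + √L))². Starting from arbitrary x⁽⁻¹⁾, x⁽⁰⁾ ∈ ℝⁿ, define the heavy-ball iterates x⁽ᵏ⁾ = x⁽ᵏ⁻¹⁾ − α̃ ∇f(x⁽ᵏ⁻¹⁾) + β̃ (x⁽ᵏ⁻¹⁾ − x⁽ᵏ⁻²⁾) for k ≥ 1. Then for every k ≥ 1, ‖x⁽ᵏ⁾ − x₀‖ ≤ C(κ) · k · ((√κ − 1)/(√κ + 1))ᵏ · (‖x⁽⁰⁾ − x₀‖ + ‖x⁽⁻¹⁾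 − x₀‖), where C(κ) := 4 (2 + 2β̃ + α̃) (√κ + 1)/(√κ − 1). -/
open scoped Matrix

lemma hb_scalar_bound (t β ρ : ℝ) (hdisc : t^2 ≤ 4*β)
    (hρ : ρ = Real.sqrt β) (hρ1 : ρ ≤ 1)
    (s : ℕ → ℝ) (hs : ∀ k, s (k+2) = t * s (k+1) - β * s k) :
    ∀ k : ℕ, |s (k+1)| ≤ (k+1) * ρ^k * (|s 0| + |s 1|) := by
  have hρ0 : 0 ≤ ρ := hρ ▸ Real.sqrt_nonneg β
  set z : ℂ := ⟨t/2, Real.sqrt (β - t^2/4)⟩ with hzdef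
  have him : (Real.sqrt (β - t^2/4))^2 = β - t^2/4 :=
    Real.sq_sqrt (by nlinarith)
  have hz1 : z + (starRingEnd ℂ) z = (t : ℂ) := by
    rw [Complex.add_conj]; norm_num [hzdef]; ring
  have hz2 : z * (starRingEnd ℂ) z = (β : ℂ) := by
    rw [Complex.mul_conj]
    norm_cast
    simp only [Complex.normSq, hzdef, MonoidWithZeroHom.coe_mk, ZeroHom.coe_mk]
    nlinarith
  have habs : ‖z‖ = ρ := by
    rw [hρ, Complex.norm_def]
    congr 1
    simp only [Complex.normSq, hzdef, MonoidWithZeroHom.coe_mk, ZeroHom.coe_mk]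
    nlinarith
  have habsc : ‖(starRingEnd ℂ) z‖ = ρ := by
    rw [Complex.norm_conj, habs]
  set w : ℕ → ℂ := fun k => (s (k+1) : ℂ) - (starRingEnd ℂ) z * s k with hwdef
  have hw : ∀ k, w (k+1) = z * w k := by
    intro k
    have h2 : (s (k+2) : ℂ) = t * s (k+1) - β * s k := by
      rw [hs k]; push_cast; ring
    simp only [hwdef]
    rw [h2, ← hz1, ← hz2]
    ring
  have habsw : ∀ k, ‖w k‖ = ρ^k * ‖w 0‖ := by
    intro k
    induction k with
    | zero => simp
    | succ k ih => rw [hw k, norm_mul, habs, ih, pow_succ]; ring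
  have key : ∀ k : ℕ, ‖(s (k+1) : ℂ)‖ ≤
      ρ^k * |s 1| + k * ρ^k * ‖w 0‖ := by
    intro k
    induction k with
    | zero => simp [Complex.norm_real]
    | succ k ih =>
      have hdecomp : (s (k+2) : ℂ) = (starRingEnd ℂ) z * s (k+1) + w (k+1) := by
        simp only [hwdef]; ring
      calc ‖(s (k+2) : ℂ)‖
          ≤ ‖(starRingEnd ℂ) z * s (k+1)‖ + ‖w (k+1)‖ := by
            rw [hdecomp]; exact norm_add_le _ _
        _ = ρ * ‖(s (k+1) : ℂ)‖ + ρ^(k+1) * ‖w 0‖ := by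
            rw [norm_mul, habsc, habsw]
        _ ≤ ρ * (ρ^k * |s 1| + k * ρ^k * ‖w 0‖) + ρ^(k+1) * ‖w 0‖ := by
            have := mul_le_mul_of_nonneg_left ih hρ0
            linarith
        _ = ρ^(k+1) * |s 1| + ((k:ℝ)+1) * ρ^(k+1) * ‖w 0‖ := by
            rw [pow_succ]; ring
        _ = ρ^(k+1) * |s 1| + ((k+1 : ℕ):ℝ) * ρ^(k+1) * ‖w 0‖ := by
            push_cast; ring
  intro k
  have hw0 : ‖w 0‖ ≤ |s 1| + ρ * |s 0| := by
    simp only [hwdef]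
    calc ‖(s 1 : ℂ) - (starRingEnd ℂ) z * s 0‖
        ≤ ‖(s 1 : ℂ)‖ + ‖(starRingEnd ℂ) z * s 0‖ :=
          norm_sub_le _ _
      _ = |s 1| + ρ * |s 0| := by rw [norm_mul, habsc, Complex.norm_real, Complex.norm_real, Real.norm_eq_abs, Real.norm_eq_abs]
  have h := key k
  rw [Complex.norm_real, Real.norm_eq_abs] at h
  have hpk : (0:ℝ) ≤ ρ^k := pow_nonneg hρ0 k
  have hkpk : (0:ℝ) ≤ (k:ℝ) * ρ^k := mul_nonneg (Nat.cast_nonneg k) hpk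
  have h2 : |s (k+1)| ≤ ρ^k * |s 1| + k * ρ^k * (|s 1| + ρ * |s 0|) := by
    have := mul_le_mul_of_nonneg_left hw0 hkpk
    linarith
  have hρle : (k:ℝ) * ρ^k * (ρ * |s 0|) ≤ k * ρ^k * |s 0| := by
    have h3 : ρ * |s 0| ≤ |s 0| := by nlinarith [abs_nonneg (s 0)]
    exact mul_le_mul_of_nonneg_left h3 hkpk
  have h4 : (0:ℝ) ≤ ρ^k * |s 0| := mul_nonneg hpk (abs_nonneg (s 0))
  have h5 : (0:ℝ) ≤ ρ^k * |s 1| := mul_nonneg hpk (abs_nonneg (s 1))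
  nlinarith

lemma hb_l2_assemble {n : ℕ} (u v0 v1 : EuclideanSpace ℝ (Fin n)) (c : ℝ) (hc : 0 ≤ c)
    (h : ∀ i, |u i| ≤ c * (|v0 i| + |v1 i|)) : ‖u‖ ≤ c * (‖v0‖ + ‖v1‖) := by
  set w0 : EuclideanSpace ℝ (Fin n) := (WithLp.equiv 2 _).symm (fun i => |v0 i|) with hw0
  set w1 : EuclideanSpace ℝ (Fin n) := (WithLp.equiv 2 _).symm (fun i => |v1 i|) with hw1
  have habs0 : ‖w0‖ = ‖v0‖ := by
    rw [EuclideanSpace.norm_eq, EuclideanSpace.norm_eq]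
    congr 1; apply Finset.sum_congr rfl; intro i _
    simp [hw0]
  have habs1 : ‖w1‖ = ‖v1‖ := by
    rw [EuclideanSpace.norm_eq, EuclideanSpace.norm_eq]
    congr 1; apply Finset.sum_congr rfl; intro i _
    simp [hw1]
  have step : ‖u‖ ≤ ‖c • (w0 + w1)‖ := by
    rw [EuclideanSpace.norm_eq, EuclideanSpace.norm_eq]
    apply Real.sqrt_le_sqrt
    apply Finset.sum_le_sum
    intro i _
    have hco : (c • (w0 + w1)) i = c * (|v0 i| + |v1 i|) := rfl
    rw [hco]
    have := h i
    have h0 : ‖u i‖ = |u i| := rfl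
    rw [h0]
    have hrhs : ‖c * (|v0 i| + |v1 i|)‖ = c * (|v0 i| + |v1 i|) := by
      rw [Real.norm_eq_abs, abs_of_nonneg]
      positivity
    rw [hrhs]
    exact pow_le_pow_left₀ (abs_nonneg _) this 2
  calc ‖u‖ ≤ ‖c • (w0 + w1)‖ := step
    _ ≤ c * (‖w0‖ + ‖w1‖) := by
        rw [norm_smul, Real.norm_eq_abs, abs_of_nonneg hc]
        exact mul_le_mul_of_nonneg_left (norm_add_le _ _) hc
    _ = c * (‖v0‖ + ‖v1‖) := by rw [habs0, habs1]


set_option maxHeartbeats 1000000 in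
/-- heavy-ball convergence for a positive definite quadratic
`f(x) = ½ xᵀ Q x + qᵀ x + c` whose eigenvalues lie in `[L, U]`, `0 < L < U`,
`κ = U/L`. With `α̃ = 4/(√U+√L)²`, `β̃ = ((√U−√L)/(√U+√L))²`, the heavy-ball
iterates `x⁽ᵏ⁾ = x⁽ᵏ⁻¹⁾ − α̃∇f(x⁽ᵏ⁻¹⁾) + β̃(x⁽ᵏ⁻¹⁾ − x⁽ᵏ⁻²⁾)` (started from
arbitrary `x⁽⁻¹⁾, x⁽⁰⁾`) satisfy, for every `k ≥ 1`,
`‖x⁽ᵏ⁾ − x₀‖ ≤ C(κ) k ((√κ−1)/(√κ+1))ᵏ (‖x⁽⁰⁾ − x₀‖ + ‖x⁽⁻¹⁾ − x₀‖)`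
with `C(κ) = 4 (2 + 2β̃ + α̃) (√κ+1)/(√κ−1)`. -/
theorem heavyBall_convergence {n : ℕ} (L U : ℝ) (hL : 0 < L) (hLU : L < U)
    (κ : ℝ) (hκ : κ = U / L)
    (Q : Matrix (Fin n) (Fin n) ℝ) (hQpd : Q.PosDef)
    (hQspec : ∀ μ ∈ spectrum ℝ Q, μ ∈ Set.Icc L U)
    (q : EuclideanSpace ℝ (Fin n)) (c : ℝ)
    (f : EuclideanSpace ℝ (Fin n) → ℝ)
    (hf : ∀ x, f x = (1 / 2) * ((fun i => x i) ⬝ᵥ Q.mulVec fun i => x i) +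
        ((fun i => q i) ⬝ᵥ fun i => x i) + c)
    (x₀ : EuclideanSpace ℝ (Fin n))
    (hmin : ∀ y, f x₀ ≤ f y) (huniq : ∀ y, (∀ z, f y ≤ f z) → y = x₀)
    (αt βt : ℝ)
    (hαt : αt = 4 / (Real.sqrt U + Real.sqrt L) ^ 2)
    (hβt : βt = ((Real.sqrt U - Real.sqrt L) / (Real.sqrt U + Real.sqrt L)) ^ 2)
    (xm1 : EuclideanSpace ℝ (Fin n))  -- the iterate x⁽⁻¹⁾
    (x : ℕ → EuclideanSpace ℝ (Fin n))
    (hx1 : x 1 = x 0 - αt • gradient f (x 0) + βt • (x 0 - xm1))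
    (hxk : ∀ k, 2 ≤ k →
      x k = x (k - 1) - αt • gradient f (x (k - 1)) + βt • (x (k - 1) - x (k - 2))) :
    ∀ k, 1 ≤ k →
      ‖x k - x₀‖ ≤
        (4 * (2 + 2 * βt + αt) * (Real.sqrt κ + 1) / (Real.sqrt κ - 1)) * k *
            ((Real.sqrt κ - 1) / (Real.sqrt κ + 1)) ^ k *
          (‖x 0 - x₀‖ + ‖xm1 - x₀‖) := by
  -- basic real facts
  set sL := Real.sqrt L with hsLdef
  set sU := Real.sqrt U with hsUdef
  have hsL : 0 < sL := Real.sqrt_pos.mpr hL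
  have hsU : 0 < sU := Real.sqrt_pos.mpr (hL.trans hLU)
  have hsL2 : sL^2 = L := Real.sq_sqrt hL.le
  have hsU2 : sU^2 = U := Real.sq_sqrt (hL.trans hLU).le
  have hsLU : sL < sU := Real.sqrt_lt_sqrt hL.le hLU
  have hsum : 0 < sU + sL := by linarith
  have hβ0 : 0 ≤ βt := hβt ▸ sq_nonneg _
  have hα0 : 0 ≤ αt := hαt ▸ div_nonneg (by norm_num) (sq_nonneg _)
  set ρ : ℝ := (sU - sL) / (sU + sL) with hρdef
  have hρ0 : 0 ≤ ρ := div_nonneg (by linarith) hsum.le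
  have hρ1 : ρ ≤ 1 := by
    rw [hρdef, div_le_one hsum]; linarith
  have hρβ : ρ = Real.sqrt βt := by
    rw [hβt, Real.sqrt_sq hρ0]
  -- √κ = sU / sL and goal ratio equality
  have hκs : Real.sqrt κ = sU / sL := by
    rw [hκ, Real.sqrt_div (hL.trans hLU).le]
  have hκρ : (Real.sqrt κ - 1) / (Real.sqrt κ + 1) = ρ := by
    rw [hκs, hρdef]
    field_simp
  have hκ1 : 1 < Real.sqrt κ := by
    rw [hκs, lt_div_iff₀ hsL]; linarith
  -- the gradient
  set T := Matrix.toEuclideanCLM (𝕜 := ℝ) Q with hT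
  have hsymm : ∀ u w : EuclideanSpace ℝ (Fin n), (inner ℝ (T u) w : ℝ) = inner ℝ u (T w) := by
    have h := (Matrix.isHermitian_iff_isSymmetric.mp hQpd.isHermitian)
    intro u w
    exact h u w
  have hfi : f = fun v : EuclideanSpace ℝ (Fin n) =>
      (1/2) * (inner ℝ v (T v) : ℝ) + (inner ℝ q v : ℝ) + c := by
    funext v
    rw [hf]
    simp only [PiLp.inner_apply, RCLike.inner_apply, conj_trivial, dotProduct]
    have e1 : ∀ x, (T v).ofLp x = (Q *ᵥ fun i => v.ofLp i) x := fun x => rfl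
    simp only [e1, mul_comm]
  have hgrad : ∀ v : EuclideanSpace ℝ (Fin n), HasGradientAt f (T v + q) v := by
    intro v
    have h1 : HasFDerivAt (fun y : EuclideanSpace ℝ (Fin n) => (inner ℝ y (T y) : ℝ))
        ((fderivInnerCLM ℝ (v, T v)).comp
          (((ContinuousLinearMap.id ℝ (EuclideanSpace ℝ (Fin n)))).prod T)) v :=
      (hasFDerivAt_id v).inner ℝ (T.hasFDerivAt (x := v))
    have h2 : HasFDerivAt (fun y : EuclideanSpace ℝ (Fin n) => (inner ℝ q y : ℝ))
        ((fderivInnerCLM ℝ (q, v)).comp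
          (((0 : EuclideanSpace ℝ (Fin n) →L[ℝ] EuclideanSpace ℝ (Fin n))).prod
            (ContinuousLinearMap.id ℝ (EuclideanSpace ℝ (Fin n))))) v :=
      (hasFDerivAt_const q v).inner ℝ (hasFDerivAt_id v)
    have h3 := ((h1.const_mul (1/2)).add h2).add_const c
    simp only [Pi.add_apply] at h3
    rw [← hfi] at h3
    have hD : ((1:ℝ)/2) • ((fderivInnerCLM ℝ (v, T v)).comp
          (((ContinuousLinearMap.id ℝ (EuclideanSpace ℝ (Fin n)))).prod T)) +
        ((fderivInnerCLM ℝ (q, v)).comp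
          (((0 : EuclideanSpace ℝ (Fin n) →L[ℝ] EuclideanSpace ℝ (Fin n))).prod
            (ContinuousLinearMap.id ℝ (EuclideanSpace ℝ (Fin n)))))
        = (InnerProductSpace.toDual ℝ (EuclideanSpace ℝ (Fin n))) (T v + q) := by
      apply ContinuousLinearMap.ext
      intro u
      have e1 : (inner ℝ v (T u) : ℝ) = inner ℝ (T v) u := (hsymm v u).symm
      have e2 : (inner ℝ u (T v) : ℝ) = inner ℝ (T v) u := real_inner_comm _ _
      simp only [ContinuousLinearMap.add_apply, ContinuousLinearMap.coe_smul',
        Pi.smul_apply, ContinuousLinearMap.comp_apply, ContinuousLinearMap.prod_apply,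
        ContinuousLinearMap.coe_id', id_eq, ContinuousLinearMap.zero_apply,
        fderivInnerCLM_apply, InnerProductSpace.toDual_apply_apply, inner_add_left,
        smul_eq_mul, inner_zero_left, inner_zero_right]
      rw [e1, e2]
      ring
    rw [hD] at h3
    simpa using h3.hasGradientAt
  have hmin0 : T x₀ + q = 0 := by
    have hloc : IsLocalMin f x₀ := Filter.Eventually.of_forall hmin
    have h0 := hloc.hasFDerivAt_eq_zero (hgrad x₀).hasFDerivAt
    apply (InnerProductSpace.toDual ℝ (EuclideanSpace ℝ (Fin n))).injective
    rw [h0, map_zero]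
  have hgradv : ∀ v, gradient f v = T (v - x₀) := by
    intro v
    rw [(hgrad v).gradient, map_sub]
    have h4 : T x₀ = -q := by rw [eq_neg_iff_add_eq_zero]; exact hmin0
    rw [h4]
    abel
  -- the error sequence
  set a : ℕ → EuclideanSpace ℝ (Fin n) :=
    fun k => Nat.casesOn k (xm1 - x₀) (fun m => x m - x₀) with ha
  have hrec : ∀ k, a (k+2) = (1+βt) • a (k+1) - αt • T (a (k+1)) - βt • a k := by
    intro k
    cases k with
    | zero =>
      show x 1 - x₀ = (1+βt) • (x 0 - x₀) - αt • T (x 0 - x₀) - βt • (xm1 - x₀)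
      rw [hx1, hgradv]
      module
    | succ m =>
      show x (m+2) - x₀ = (1+βt) • (x (m+1) - x₀) - αt • T (x (m+1) - x₀) - βt • (x m - x₀)
      have e := hxk (m+2) (by omega)
      have e1 : m + 2 - 1 = m + 1 := by omega
      have e2 : m + 2 - 2 = m := by omega
      rw [e1, e2] at e
      rw [e, hgradv]
      module
  -- eigen data
  have hQ : Q.IsHermitian := hQpd.isHermitian
  set b := hQ.eigenvectorBasis with hb
  set μ := hQ.eigenvalues with hμ
  have hTb : ∀ i, T (b i) = μ i • b i := by
    intro i
    have h := hQ.mulVec_eigenvectorBasis i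
    apply WithLp.ofLp_injective 2
    rw [hT, Matrix.ofLp_toEuclideanCLM]
    exact h
  have hcoef : ∀ i (v : EuclideanSpace ℝ (Fin n)),
      (inner ℝ (b i) (T v) : ℝ) = μ i * inner ℝ (b i) v := by
    intro i v
    rw [← hsymm (b i) v, hTb i, real_inner_smul_left]
  have hμmem : ∀ i, L ≤ μ i ∧ μ i ≤ U := by
    intro i
    have := hQspec (μ i) (hQ.eigenvalues_mem_spectrum_real i)
    exact ⟨this.1, this.2⟩
  -- discriminant
  have hαD : αt * (sU+sL)^2 = 4 := by
    rw [hαt]; field_simp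
  have hβD : βt * (sU+sL)^2 = (sU-sL)^2 := by
    rw [hβt, div_pow]; field_simp
  have hdisc : ∀ i, (1 + βt - αt * μ i)^2 ≤ 4*βt := by
    intro i
    obtain ⟨hi1, hi2⟩ := hμmem i
    have hP : (0:ℝ) < (sU+sL)^2 := by positivity
    have h1 : (1 + βt - αt * μ i) * (sU+sL)^2 = 2*U + 2*L - 4*μ i := by
      linear_combination hβD - μ i * hαD + 2*hsU2 + 2*hsL2
    have h2 : (2*U + 2*L - 4*μ i)^2 ≤ (2*U - 2*L)^2 := by nlinarith
    have h3 : (2*U - 2*L)^2 = 4*βt*((sU+sL)^2)^2 := by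
      have e : sU^2 - sL^2 = U - L := by rw [hsU2, hsL2]
      have h4 : (sU-sL)^2 * (sU+sL)^2 = (U - L)^2 := by
        linear_combination (sU^2 - sL^2 + U - L) * e
      nlinarith [hβD]
    have hP2 : (0:ℝ) < ((sU+sL)^2)^2 := by positivity
    have h1sq : ((1 + βt - αt*μ i)*(sU+sL)^2)^2 = (2*U+2*L-4*μ i)^2 := by rw [h1]
    have h5 : (1 + βt - αt*μ i)^2 * ((sU+sL)^2)^2 ≤ (4*βt) * ((sU+sL)^2)^2 := by
      calc (1 + βt - αt*μ i)^2 * ((sU+sL)^2)^2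
          = ((1 + βt - αt*μ i)*(sU+sL)^2)^2 := by ring
        _ = (2*U+2*L-4*μ i)^2 := h1sq
        _ ≤ (2*U-2*L)^2 := h2
        _ = 4*βt*((sU+sL)^2)^2 := h3
    exact le_of_mul_le_mul_right h5 hP2
  -- coefficient sequences
  have hcoefbound : ∀ (i : Fin n) (k : ℕ),
      |(inner ℝ (b i) (a (k+1)) : ℝ)| ≤
        (k+1) * ρ^k * (|(inner ℝ (b i) (a 0) : ℝ)| + |(inner ℝ (b i) (a 1) : ℝ)|) := by
    intro i
    have hsrec : ∀ k, (inner ℝ (b i) (a (k+2)) : ℝ) =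
        (1 + βt - αt * μ i) * inner ℝ (b i) (a (k+1)) - βt * inner ℝ (b i) (a k) := by
      intro k
      rw [hrec k, inner_sub_right, inner_sub_right, inner_smul_right, inner_smul_right,
        inner_smul_right, hcoef]
      ring
    exact hb_scalar_bound (1 + βt - αt * μ i) βt ρ (hdisc i) hρβ hρ1
      (fun k => (inner ℝ (b i) (a k) : ℝ)) hsrec
  -- assemble
  intro k hk
  have hmain : ‖x k - x₀‖ ≤ ((k:ℝ)+1) * ρ^(k) * (‖xm1 - x₀‖ + ‖x 0 - x₀‖) := by
    obtain ⟨m, rfl⟩ : ∃ m, k = m + 1 := ⟨k - 1, by omega⟩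
    have hxa : x (m+1) - x₀ = a (m+2) := rfl
    rw [hxa, ← b.repr.norm_map (a (m+2))]
    have h0 : xm1 - x₀ = a 0 := rfl
    have h1 : x 0 - x₀ = a 1 := rfl
    rw [h0, h1, ← b.repr.norm_map (a 0), ← b.repr.norm_map (a 1)]
    have := hb_l2_assemble (b.repr (a (m+2))) (b.repr (a 0)) (b.repr (a 1))
      (((m:ℝ)+1+1) * ρ^(m+1)) (by positivity) ?_
    · calc ‖b.repr (a (m+2))‖ ≤ ((m:ℝ)+1+1) * ρ^(m+1) * (‖b.repr (a 0)‖ + ‖b.repr (a 1)‖) :=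
            this
        _ = (((m+1:ℕ):ℝ)+1) * ρ^(m+1) * (‖b.repr (a 0)‖ + ‖b.repr (a 1)‖) := by push_cast; ring
    · intro i
      have := hcoefbound i (m+1)
      rw [b.repr_apply_apply, b.repr_apply_apply, b.repr_apply_apply]
      calc |(inner ℝ (b i) (a (m+2)) : ℝ)| ≤
            ((m+1:ℕ)+1) * ρ^(m+1) * (|(inner ℝ (b i) (a 0) : ℝ)| + |(inner ℝ (b i) (a 1) : ℝ)|) :=
              this
        _ = ((m:ℝ)+1+1) * ρ^(m+1) * (|(inner ℝ (b i) (a 0) : ℝ)| + |(inner ℝ (b i) (a 1) : ℝ)|) := by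
              push_cast; ring
  -- final numeric comparison
  rw [hκρ]
  have hρk : (0:ℝ) ≤ ρ^k := pow_nonneg hρ0 k
  have hS : (0:ℝ) ≤ ‖x 0 - x₀‖ + ‖xm1 - x₀‖ := by positivity
  have hk1 : (1:ℝ) ≤ (k:ℝ) := by exact_mod_cast hk
  have hCratio : (1:ℝ) ≤ (Real.sqrt κ + 1) / (Real.sqrt κ - 1) := by
    rw [le_div_iff₀ (by linarith)]; linarith
  have hC : (8:ℝ) ≤ 4 * (2 + 2*βt + αt) * (Real.sqrt κ + 1) / (Real.sqrt κ - 1) := by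
    have : 4 * (2 + 2*βt + αt) * (Real.sqrt κ + 1) / (Real.sqrt κ - 1)
        = (4 * (2 + 2*βt + αt)) * ((Real.sqrt κ + 1) / (Real.sqrt κ - 1)) := by ring
    rw [this]
    nlinarith
  have hfac : ((k:ℝ)+1) ≤ (4 * (2 + 2*βt + αt) * (Real.sqrt κ + 1) / (Real.sqrt κ - 1)) * k := by
    nlinarith
  calc ‖x k - x₀‖ ≤ ((k:ℝ)+1) * ρ^k * (‖xm1 - x₀‖ + ‖x 0 - x₀‖) := hmain
    _ = ((k:ℝ)+1) * ρ^k * (‖x 0 - x₀‖ + ‖xm1 - x₀‖) := by ring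
    _ ≤ ((4 * (2 + 2*βt + αt) * (Real.sqrt κ + 1) / (Real.sqrt κ - 1)) * k) * ρ^k *
          (‖x 0 - x₀‖ + ‖xm1 - x₀‖) := by
        apply mul_le_mul_of_nonneg_right _ hS
        exact mul_le_mul_of_nonneg_right hfac hρk
    _ = (4 * (2 + 2*βt + αt) * (Real.sqrt κ + 1) / (Real.sqrt κ - 1)) * k * ρ^k *
          (‖x 0 - x₀‖ + ‖xm1 - x₀‖) := by ring
end

section
/- Let a, b ∈ ℝ and M = [[a, b], [1, 0]] ∈ ℝ²ˣ², with spectral radius ρ(M) (the maximum modulus of the eigenvalues of M). Then for every k ∈ ℕ with k ≥ 1 there exist a unitary matrix V ∈ ℂ²ˣ², complex numbers λ₁, λ₂ with |λ₁| ≤ ρ(M) and |λ₂| ≤ ρ(M), and a complex number d with |d| ≤ k (|a| + |b| + 1) ρ(M)^{k−1}, such that Mᵏ = V [[λ₁ᵏ, d], [0, λ₂ᵏ]] Vᴴ, where Vᴴ denotes the conjugate transpose of V. -/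
open scoped Matrix ComplexConjugate

noncomputable def schurD (l m c : ℂ) : ℕ → ℂ
  | 0 => 0
  | k+1 => l ^ k * c + schurD l m c k * m

lemma schurT_pow (l m c : ℂ) :
    ∀ k, (!![l, c; 0, m] : Matrix (Fin 2) (Fin 2) ℂ) ^ k
      = !![l ^ k, schurD l m c k; 0, m ^ k] := by
  intro k
  induction k with
  | zero => simp [schurD, Matrix.one_fin_two]
  | succ n ih =>
      rw [pow_succ, ih]
      ext i j
      fin_cases i <;> fin_cases j <;>
        simp [Matrix.mul_apply, Fin.sum_univ_two, schurD, pow_succ] <;> try ring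

lemma schurD_abs_le (l m c : ℂ) (ρ : ℝ) (hl : ‖l‖ ≤ ρ) (hm : ‖m‖ ≤ ρ) :
    ∀ k : ℕ, ‖schurD l m c k‖ ≤ k * ‖c‖ * ρ ^ (k - 1) := by
  have hρ0 : 0 ≤ ρ := le_trans (norm_nonneg _) hl
  intro k
  induction k with
  | zero => simp [schurD]
  | succ n ih =>
      calc ‖schurD l m c (n+1)‖
          ≤ ‖l ^ n * c‖ + ‖schurD l m c n * m‖ := by
            rw [schurD]; exact norm_add_le _ _
        _ ≤ ρ ^ n * ‖c‖ + (n * ‖c‖ * ρ ^ (n - 1)) * ρ := by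
            rw [norm_mul, norm_mul, norm_pow]
            gcongr
        _ ≤ (n + 1 : ℕ) * ‖c‖ * ρ ^ ((n + 1) - 1) := by
            rcases n with _ | m
            · simp
            · simp only [Nat.add_sub_cancel]
              push_cast
              rw [show ((m:ℝ)+1) * ‖c‖ * ρ ^ m * ρ
                  = ((m:ℝ)+1) * ‖c‖ * ρ ^ (m+1) by rw [mul_assoc, ← pow_succ]]
              exact le_of_eq (by ring)

/-- For `M = [[a, b], [1, 0]]` with spectral radius `ρ(M)` (the largest
modulus of its complex eigenvalues), and any `k ≥ 1`, there is a unitary `V ∈ ℂ²ˣ²`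
such that `Mᵏ = V [[λ₁ᵏ, d], [0, λ₂ᵏ]] Vᴴ` with `|λ₁|, |λ₂| ≤ ρ(M)` and
`|d| ≤ k (|a| + |b| + 1) ρ(M)^(k−1)`. -/
theorem power_of_companion_schur (a b : ℝ)
    (M : Matrix (Fin 2) (Fin 2) ℝ) (hM : M = !![a, b; 1, 0])
    (ρ : ℝ)
    (hρ : IsGreatest ((fun z : ℂ => ‖z‖) '' spectrum ℂ (M.map (Complex.ofReal : ℝ → ℂ))) ρ)
    (k : ℕ) (hk : 1 ≤ k) :
    ∃ (V : Matrix (Fin 2) (Fin 2) ℂ) (l1 l2 d : ℂ),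
      Vᴴ * V = 1 ∧
      ‖l1‖ ≤ ρ ∧ ‖l2‖ ≤ ρ ∧
      ‖d‖ ≤ (k : ℝ) * (|a| + |b| + 1) * ρ ^ (k - 1) ∧
      (M.map (Complex.ofReal : ℝ → ℂ)) ^ k = V * !![l1 ^ k, d; 0, l2 ^ k] * Vᴴ := by
  have hA' : M.map (Complex.ofReal : ℝ → ℂ) = !![(a:ℂ), b; 1, 0] := by
    rw [hM]; ext i j; fin_cases i <;> fin_cases j <;> simp [Matrix.map_apply]
  rw [hA'] at hρ ⊢
  -- a root of x^2 = a x + b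
  obtain ⟨s, hs⟩ := IsAlgClosed.exists_pow_nat_eq ((a:ℂ)^2 + 4*b) (n := 2) (by norm_num)
  set l : ℂ := ((a:ℂ) + s) / 2 with hl
  have hroot : l ^ 2 = a * l + b := by
    rw [hl]; field_simp; linear_combination hs
  set m : ℂ := (a:ℂ) - l with hm
  -- both roots are in the spectrum
  have hmem : ∀ x : ℂ, x ^ 2 = a * x + b →
      x ∈ spectrum ℂ (!![(a:ℂ), b; 1, 0] : Matrix (Fin 2) (Fin 2) ℂ) := by
    intro x hx
    rw [spectrum.mem_iff, Matrix.isUnit_iff_isUnit_det]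
    have : ((algebraMap ℂ (Matrix (Fin 2) (Fin 2) ℂ)) x
        - !![(a:ℂ), b; 1, 0]).det = x^2 - a*x - b := by
      rw [Matrix.det_fin_two]
      simp [Matrix.algebraMap_matrix_apply]
      ring
    rw [this, hx]
    simp
  have hlρ : ‖l‖ ≤ ρ := hρ.2 ⟨l, hmem l hroot, rfl⟩
  have hmρ : ‖m‖ ≤ ρ := by
    refine hρ.2 ⟨m, hmem m ?_, rfl⟩
    rw [hm]; linear_combination hroot
  have hρ0 : 0 ≤ ρ := le_trans (norm_nonneg _) hlρ
  -- the unitary matrix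
  set n : ℝ := Real.sqrt (‖l‖ ^ 2 + 1) with hn
  have h1 : (n:ℝ) ^ 2 = ‖l‖ ^ 2 + 1 := by
    rw [hn]; exact Real.sq_sqrt (by positivity)
  have hnpos : (0:ℝ) < n := by rw [hn]; positivity
  have hn2 : (n:ℂ) ^ 2 = l * conj l + 1 := by
    rw [Complex.mul_conj, Complex.normSq_eq_norm_sq]
    exact_mod_cast h1
  have hn0 : (n:ℂ) ≠ 0 := by exact_mod_cast hnpos.ne'
  set c : ℂ := ((b:ℂ) * conj l ^ 2 - a * conj l - 1) / (n:ℂ)^2 with hc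
  set V : Matrix (Fin 2) (Fin 2) ℂ := !![l/n, -1/n; 1/n, conj l/n] with hV
  have hVH : Vᴴ = !![conj l/n, 1/n; -1/n, l/n] := by
    rw [hV]; ext i j; fin_cases i <;> fin_cases j <;>
      simp [Matrix.conjTranspose_apply]
  have hunit : Vᴴ * V = 1 := by
    rw [hVH, hV]; ext i j; fin_cases i <;> fin_cases j <;>
      simp [Matrix.mul_apply, Fin.sum_univ_two, Matrix.one_apply] <;>
      field_simp <;>
      first
        | linear_combination -hn2
        | linear_combination hn2
        | ring
  set T : Matrix (Fin 2) (Fin 2) ℂ := !![l, c; 0, m] with hT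
  have hAV : (!![(a:ℂ), b; 1, 0] : Matrix (Fin 2) (Fin 2) ℂ) * V = V * T := by
    rw [hV, hT, hc, hm]; ext i j; fin_cases i <;> fin_cases j <;>
      simp [Matrix.mul_apply, Fin.sum_univ_two]
    · field_simp; linear_combination -hroot
    · field_simp
      linear_combination ((starRingEnd ℂ) l * ↑b - l) * hn2
        - (starRingEnd ℂ) l * hroot
    · field_simp
    · field_simp
      linear_combination ((starRingEnd ℂ) l * (l - ↑a) - 1) * hn2
        + (starRingEnd ℂ) l^2 * hroot
  have hVVH : V * Vᴴ = 1 := mul_eq_one_comm.mp hunit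
  have hdecomp : (!![(a:ℂ), b; 1, 0] : Matrix (Fin 2) (Fin 2) ℂ) = V * T * Vᴴ := by
    rw [← hAV, Matrix.mul_assoc, hVVH, Matrix.mul_one]
  -- powers
  have hpow : ∀ j : ℕ, (!![(a:ℂ), b; 1, 0] : Matrix (Fin 2) (Fin 2) ℂ) ^ j
      = V * T ^ j * Vᴴ := by
    intro j
    induction j with
    | zero => simp [hVVH]
    | succ i ih =>
        rw [pow_succ, ih, hdecomp, pow_succ]
        simp only [← Matrix.mul_assoc]
        rw [Matrix.mul_assoc (V * T ^ i) Vᴴ V, hunit, Matrix.mul_one]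
  -- bound on |c|
  have hcabs : ‖c‖ ≤ |a| + |b| + 1 := by
    rw [hc]
    set r : ℝ := ‖l‖ with hr
    have hr0 : 0 ≤ r := norm_nonneg _
    have hnum : ‖(b:ℂ) * conj l ^ 2 - a * conj l - 1‖
        ≤ |b| * r^2 + |a| * r + 1 := by
      calc ‖(b:ℂ) * conj l ^ 2 - a * conj l - 1‖
          ≤ ‖(b:ℂ) * conj l ^ 2 - a * conj l‖ + ‖(1:ℂ)‖ := by
            exact norm_sub_le _ _
        _ ≤ ‖(b:ℂ) * conj l ^ 2‖ + ‖(a:ℂ) * conj l‖ + 1 := by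
            rw [norm_one]
            gcongr
            exact norm_sub_le _ _
        _ = |b| * r^2 + |a| * r + 1 := by
            rw [norm_mul, norm_mul, norm_pow, Complex.norm_conj, Complex.norm_real,
              Complex.norm_real, Real.norm_eq_abs, Real.norm_eq_abs, ← hr]
    have hden : ‖(n:ℂ)^2‖ = r^2 + 1 := by
      rw [norm_pow, Complex.norm_real, Real.norm_eq_abs, abs_of_pos hnpos, h1, hr]
    rw [norm_div, hden]
    rw [div_le_iff₀ (by positivity)]
    have hrr : r ≤ r^2 + 1 := by nlinarith [sq_nonneg (r - 1)]
    calc ‖(b:ℂ) * conj l ^ 2 - a * conj l - 1‖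
        ≤ |b| * r^2 + |a| * r + 1 := hnum
      _ ≤ (|a| + |b| + 1) * (r^2 + 1) := by nlinarith [abs_nonneg a, abs_nonneg b]
  -- conclude
  refine ⟨V, l, m, schurD l m c k, hunit, hlρ, hmρ, ?_, ?_⟩
  · calc ‖schurD l m c k‖ ≤ k * ‖c‖ * ρ ^ (k-1) :=
        schurD_abs_le l m c ρ hlρ hmρ k
      _ ≤ (k:ℝ) * (|a| + |b| + 1) * ρ ^ (k-1) := by gcongr
  · rw [hpow k, schurT_pow l m c k]
end

section
/- Let 0 < L ≤ U and define α̃ := 4/(√U + √L)² and β̃ := ((√U − √L)/(√U + √L))². Then for every real λ ∈ [L, U], the matrix B := [[1 + β̃ − α̃ λ, −β̃], [1, 0]] ∈ ℝ²ˣ² has spectral radius ρ(B) = √β̃ = (√U − √L)/(√U + √L). -/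
set_option maxHeartbeats 1000000

lemma spectrum_fin_two_iff (a b c d z : ℂ) :
    z ∈ spectrum ℂ !![a, b; c, d] ↔ (z - a) * (z - d) - b * c = 0 := by
  rw [spectrum.mem_iff, Matrix.isUnit_iff_isUnit_det, isUnit_iff_ne_zero, not_not]
  have : algebraMap ℂ (Matrix (Fin 2) (Fin 2) ℂ) z - !![a, b; c, d]
      = !![z - a, -b; -c, z - d] := by
    rw [Matrix.algebraMap_eq_diagonal]
    ext i j
    fin_cases i <;> fin_cases j <;> simp [Matrix.diagonal]
  rw [this, Matrix.det_fin_two_of]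
  constructor <;> intro h <;> linear_combination h


/-- For `0 < L ≤ U`, heavy-ball parameters `α̃ = 4/(√U+√L)²`,
`β̃ = ((√U−√L)/(√U+√L))²`, and any `λ ∈ [L, U]`, the matrix
`B = [[1 + β̃ − α̃λ, −β̃], [1, 0]]` has spectral radius `ρ(B) = √β̃ = (√U−√L)/(√U+√L)`. -/
theorem heavyBall_block_spectral_radius (L U : ℝ) (hL : 0 < L) (hLU : L ≤ U)
    (αt βt : ℝ)
    (hαt : αt = 4 / (Real.sqrt U + Real.sqrt L) ^ 2)
    (hβt : βt = ((Real.sqrt U - Real.sqrt L) / (Real.sqrt U + Real.sqrt L)) ^ 2)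
    (lam : ℝ) (hlam : lam ∈ Set.Icc L U)
    (B : Matrix (Fin 2) (Fin 2) ℝ) (hB : B = !![1 + βt - αt * lam, -βt; 1, 0]) :
    IsGreatest ((fun z : ℂ => ‖z‖) '' spectrum ℂ (B.map (Complex.ofReal : ℝ → ℂ)))
        (Real.sqrt βt) ∧
      Real.sqrt βt = (Real.sqrt U - Real.sqrt L) / (Real.sqrt U + Real.sqrt L) := by
  set r := Real.sqrt L with hr
  set s := Real.sqrt U with hs
  have hr0 : 0 < r := Real.sqrt_pos.mpr hL
  have hrs : r ≤ s := Real.sqrt_le_sqrt hLU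
  have hsr0 : 0 < s + r := by linarith
  have hr2 : r ^ 2 = L := Real.sq_sqrt hL.le
  have hs2 : s ^ 2 = U := Real.sq_sqrt (hL.le.trans hLU)
  obtain ⟨hlam1, hlam2⟩ := hlam
  set t : ℝ := 1 + βt - αt * lam with ht
  have h1 : r ^ 2 ≤ lam := hr2 ▸ hlam1
  have h2 : lam ≤ s ^ 2 := hs2 ▸ hlam2
  have hP : (0 : ℝ) < (s + r) ^ 2 := by positivity
  have htP : t * (s + r) ^ 2 = 2 * s ^ 2 + 2 * r ^ 2 - 4 * lam := by
    rw [ht, hαt, hβt]; field_simp; ring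
  have hβP : βt * (s + r) ^ 2 = (s - r) ^ 2 := by
    rw [hβt]; field_simp
  have h3 : (t * (s + r) ^ 2) ^ 2 = (2 * s ^ 2 + 2 * r ^ 2 - 4 * lam) ^ 2 := by
    rw [htP]
  have h4 : βt * ((s + r) ^ 2) ^ 2 = (s - r) ^ 2 * (s + r) ^ 2 := by
    rw [← hβP]; ring
  have hkey : t ^ 2 ≤ 4 * βt := by
    nlinarith [mul_nonneg (sub_nonneg.mpr h1) (sub_nonneg.mpr h2), mul_pos hP hP]
  have hβ0 : 0 ≤ βt := by nlinarith [sq_nonneg t]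
  have hsqrt : Real.sqrt βt = (s - r) / (s + r) := by
    rw [hβt]; exact Real.sqrt_sq (div_nonneg (by linarith) hsr0.le)
  clear h3 h4 htP hβP hP h1 h2 hr2 hs2 hrs hr0 hsr0 hαt hβt hlam1 hlam2
  have hBmap : B.map (Complex.ofReal : ℝ → ℂ)
      = !![(t : ℂ), (-βt : ℝ); ((1 : ℝ) : ℂ), ((0 : ℝ) : ℂ)] := by
    rw [hB]
    ext i j
    fin_cases i <;> fin_cases j <;> simp [Matrix.map_apply, ht]
  have hmem : ∀ z : ℂ, z ∈ spectrum ℂ (B.map (Complex.ofReal : ℝ → ℂ)) ↔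
      z ^ 2 - t * z + βt = 0 := by
    intro z
    rw [hBmap, spectrum_fin_two_iff]
    constructor <;> intro h <;> push_cast at h ⊢ <;> linear_combination h
  set y : ℝ := Real.sqrt (4 * βt - t ^ 2) with hy
  have hy2 : y * y = 4 * βt - t ^ 2 := Real.mul_self_sqrt (by linarith)
  have hy2C : (y : ℂ) * y = 4 * βt - t ^ 2 := by exact_mod_cast congrArg Complex.ofReal hy2
  refine ⟨⟨⟨(t / 2 : ℝ) + (y / 2 : ℝ) * Complex.I, ?_, ?_⟩, ?_⟩, hsqrt⟩
  · rw [hmem]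
    push_cast
    linear_combination ((y : ℂ) * y / 4) * Complex.I_sq + (-1 / 4 : ℂ) * hy2C
  · beta_reduce; rw [Complex.norm_add_mul_I]
    rw [show (t / 2) ^ 2 + (y / 2) ^ 2 = βt by linear_combination (1/4 : ℝ) * hy2]
  · rintro m ⟨z, hz, rfl⟩
    rw [hmem] at hz
    have hre : z.re ^ 2 - z.im ^ 2 - t * z.re + βt = 0 := by
      have := congrArg Complex.re hz
      simpa [pow_two, Complex.mul_re, Complex.mul_im] using this
    have him : z.im * (2 * z.re - t) = 0 := by
      have := congrArg Complex.im hz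
      simp [pow_two, Complex.mul_re, Complex.mul_im] at this
      linarith
    have habs : z.re * z.re + z.im * z.im = βt := by
      rcases mul_eq_zero.mp him with hy0 | hx
      · have hyy : z.im ^ 2 = 0 := by rw [hy0]; ring
        have h6 : 4 * βt ≤ t ^ 2 := by nlinarith [sq_nonneg (2 * z.re - t)]
        have h7 : (2 * z.re - t) ^ 2 = 0 := by nlinarith [sq_nonneg (2 * z.re - t)]
        have h8 : 2 * z.re - t = 0 := by
          exact pow_eq_zero_iff (by norm_num) |>.mp h7
        nlinarith [h8, h6, hkey, hyy, hre]
      · have htx : t * z.re = 2 * z.re ^ 2 := by linear_combination -z.re * hx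
        nlinarith [hre, htx]
    beta_reduce; rw [Complex.norm_def, Complex.normSq_apply, habs]
end

section
/- Let 0 < L < U with κ := U/L > 1, and define α̃ := 4/(√U + √L)², β̃ := ((√U − √L)/(√U + √L))², and c̃ := 2 + 2β̃ + α̃. Then for every real λ ∈ [L, U] and every k ∈ ℕ, the matrix B := [[1 + β̃ − α̃ λ, −β̃], [1, 0]] ∈ ℝ²ˣ² satisfies ‖Bᵏ‖ ≤ ((√κ − 1)/(√κ + 1))ᵏ · (1 + k c̃ (√κ + 1)/(√κ − 1)), where ‖·‖ denotes the spectral norm (operator norm induced by the Euclidean norm). -/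
open Matrix Real

/-- operator norm bound by sum of absolute values of entries (2x2 real). -/
lemma opNorm2_le_sum_abs (M : Matrix (Fin 2) (Fin 2) ℝ) :
    ‖Matrix.toEuclideanCLM (𝕜 := ℝ) M‖ ≤ |M 0 0| + |M 0 1| + |M 1 0| + |M 1 1| := by
  set a := M 0 0; set b := M 0 1; set c := M 1 0; set d := M 1 1
  apply ContinuousLinearMap.opNorm_le_bound _ (by positivity)
  intro x
  have hx : ‖x‖ = Real.sqrt (x 0 ^ 2 + x 1 ^ 2) := by
    rw [EuclideanSpace.norm_eq]
    simp [Fin.sum_univ_two, sq_abs]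
  have hy := Matrix.ofLp_toEuclideanCLM (𝕜 := ℝ) M x
  set y := (Matrix.toEuclideanCLM (𝕜 := ℝ) M) x with hydef
  have hy0 : y 0 = a * x 0 + b * x 1 := by
    have := congrFun hy 0
    simpa [Matrix.mulVec, dotProduct, Fin.sum_univ_two] using this
  have hy1 : y 1 = c * x 0 + d * x 1 := by
    have := congrFun hy 1
    simpa [Matrix.mulVec, dotProduct, Fin.sum_univ_two] using this
  have hnorm : ‖y‖ = Real.sqrt ((a * x 0 + b * x 1) ^ 2 + (c * x 0 + d * x 1) ^ 2) := by
    rw [EuclideanSpace.norm_eq]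
    simp [Fin.sum_univ_two, sq_abs, hy0, hy1]
  rw [hnorm, hx]
  have key : (a * x 0 + b * x 1) ^ 2 + (c * x 0 + d * x 1) ^ 2
      ≤ (|a| + |b| + |c| + |d|) ^ 2 * (x 0 ^ 2 + x 1 ^ 2) := by
    have hX : (0:ℝ) ≤ x 0 ^ 2 + x 1 ^ 2 := by positivity
    have cs1 : (a * x 0 + b * x 1) ^ 2 ≤ (a^2 + b^2) * (x 0 ^ 2 + x 1 ^ 2) := by
      nlinarith [sq_nonneg (a * x 1 - b * x 0)]
    have cs2 : (c * x 0 + d * x 1) ^ 2 ≤ (c^2 + d^2) * (x 0 ^ 2 + x 1 ^ 2) := by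
      nlinarith [sq_nonneg (c * x 1 - d * x 0)]
    have hfac : a^2 + b^2 + c^2 + d^2 ≤ (|a| + |b| + |c| + |d|) ^ 2 := by
      have e : (|a| + |b| + |c| + |d|) ^ 2
          = |a|^2 + |b|^2 + |c|^2 + |d|^2
            + 2*(|a| * |b| + |a| * |c| + |a| * |d| + |b| * |c| + |b| * |d| + |c| * |d|) := by ring
      have hcross : (0:ℝ) ≤ |a| * |b| + |a| * |c| + |a| * |d| + |b| * |c| + |b| * |d| + |c| * |d| := by
        positivity
      rw [e, sq_abs, sq_abs, sq_abs, sq_abs]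
      linarith
    have hmul := mul_le_mul_of_nonneg_right hfac hX
    calc (a * x 0 + b * x 1) ^ 2 + (c * x 0 + d * x 1) ^ 2
        ≤ (a^2 + b^2 + c^2 + d^2) * (x 0 ^ 2 + x 1 ^ 2) := by
          rw [add_mul, add_mul, add_mul]; linarith
      _ ≤ (|a| + |b| + |c| + |d|) ^ 2 * (x 0 ^ 2 + x 1 ^ 2) := hmul
  calc Real.sqrt ((a * x 0 + b * x 1) ^ 2 + (c * x 0 + d * x 1) ^ 2)
      ≤ Real.sqrt ((|a| + |b| + |c| + |d|) ^ 2 * (x 0 ^ 2 + x 1 ^ 2)) :=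
        Real.sqrt_le_sqrt key
    _ = (|a| + |b| + |c| + |d|) * Real.sqrt (x 0 ^ 2 + x 1 ^ 2) := by
        rw [Real.sqrt_mul (by positivity), Real.sqrt_sq (by positivity)]

/-- Heavy-ball scalar recurrence. -/
def hbU (τ β : ℝ) : ℕ → ℝ
  | 0 => 0
  | 1 => 1
  | (n+2) => τ * hbU τ β (n+1) - β * hbU τ β n

lemma hbU_abs_le (τ r : ℝ) (hr : 0 < r) (hτ : |τ| ≤ 2 * r) :
    ∀ n : ℕ, |hbU τ (r^2) n| ≤ n * r ^ (n - 1) := by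
  have hdisc : 0 ≤ 4 * r ^ 2 - τ ^ 2 := by
    nlinarith [sq_abs τ, abs_nonneg τ]
  set d := Real.sqrt (4 * r ^ 2 - τ ^ 2) with hd
  have hd2 : d ^ 2 = 4 * r ^ 2 - τ ^ 2 := Real.sq_sqrt hdisc
  set μ : ℂ := (τ/2 : ℝ) + (d/2 : ℝ) * Complex.I with hμ
  set ν : ℂ := (τ/2 : ℝ) - (d/2 : ℝ) * Complex.I with hν
  have hsum : μ + ν = (τ : ℂ) := by rw [hμ, hν]; push_cast; ring
  have hdc : ((d : ℂ))^2 = ((4 * r ^ 2 - τ ^ 2 : ℝ) : ℂ) := by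
    rw [← hd2]; push_cast; ring
  have hprod : μ * ν = ((r : ℂ))^2 := by
    calc μ * ν = (((τ/2:ℝ)) : ℂ)^2 - (((d/2:ℝ)):ℂ)^2 * Complex.I^2 := by rw [hμ, hν]; ring
      _ = ((τ:ℂ)^2 + (d:ℂ)^2)/4 := by rw [Complex.I_sq]; push_cast; ring
      _ = ((r:ℂ))^2 := by rw [hdc]; push_cast; ring
  have hμabs : ‖μ‖ = r := by
    rw [Complex.norm_def]
    have : Complex.normSq μ = r ^ 2 := by
      simp [hμ, Complex.normSq_apply]
      nlinarith [hd2]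
    rw [this, Real.sqrt_sq hr.le]
  have hνabs : ‖ν‖ = r := by
    rw [Complex.norm_def]
    have : Complex.normSq ν = r ^ 2 := by
      simp [hν, Complex.normSq_apply]
      nlinarith [hd2]
    rw [this, Real.sqrt_sq hr.le]
  -- key identity : u (n+1) = μ u n + ν ^ n  (over ℂ)
  have hkey : ∀ n : ℕ, ((hbU τ (r^2) (n+1) : ℝ) : ℂ) - μ * ((hbU τ (r^2) n : ℝ) : ℂ) = ν ^ n := by
    intro n
    induction n with
    | zero => simp [hbU]
    | succ m ih =>
      have hrec : hbU τ (r^2) (m+2) = τ * hbU τ (r^2) (m+1) - r^2 * hbU τ (r^2) m := rfl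
      rw [hrec]
      push_cast
      calc (τ : ℂ) * (hbU τ (r^2) (m+1) : ℝ) - ((r:ℂ))^2 * (hbU τ (r^2) m : ℝ)
            - μ * (hbU τ (r^2) (m+1) : ℝ)
          = ν * (((hbU τ (r^2) (m+1) : ℝ) : ℂ) - μ * ((hbU τ (r^2) m : ℝ) : ℂ)) := by
            rw [← hsum, ← hprod]; ring
        _ = ν * ν ^ m := by rw [ih]
        _ = ν ^ (m+1) := by ring
  -- step bound
  have hstep : ∀ n : ℕ, |hbU τ (r^2) (n+1)| ≤ r * |hbU τ (r^2) n| + r ^ n := by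
    intro n
    have h1 : ((hbU τ (r^2) (n+1) : ℝ) : ℂ) = μ * ((hbU τ (r^2) n : ℝ) : ℂ) + ν ^ n := by
      have := hkey n; linear_combination this
    have := congrArg (‖·‖) h1
    rw [Complex.norm_real, Real.norm_eq_abs] at this
    rw [this]
    calc ‖μ * ((hbU τ (r^2) n : ℝ) : ℂ) + ν ^ n‖
        ≤ ‖μ * ((hbU τ (r^2) n : ℝ) : ℂ)‖ + ‖ν ^ n‖ :=
          norm_add_le _ _
      _ = r * |hbU τ (r^2) n| + r ^ n := by
          rw [norm_mul, norm_pow, hμabs, hνabs, Complex.norm_real, Real.norm_eq_abs]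
  -- final induction
  intro n
  induction n with
  | zero => simp [hbU]
  | succ m ih =>
    cases m with
    | zero => simpa [hbU] using le_refl (1:ℝ)
    | succ p =>
      have h := hstep (p+1)
      have ih' : |hbU τ (r^2) (p+1)| ≤ (p+1) * r ^ p := by
        simpa using ih
      have hpow : r * r ^ p = r ^ (p+1) := by ring
      have hrn : (0:ℝ) < r ^ (p+1) := pow_pos hr _
      have goal' : |hbU τ (r^2) (p+2)| ≤ ((p:ℝ)+2) * r ^ (p+1) := by
        have h2 : r * |hbU τ (r^2) (p+1)| ≤ r * ((p+1) * r ^ p) :=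
          mul_le_mul_of_nonneg_left ih' hr.le
        have h3 : r * ((p+1) * r ^ p) = ((p:ℝ)+1) * r ^ (p+1) := by rw [← hpow]; ring
        calc |hbU τ (r^2) (p+2)| ≤ r * |hbU τ (r^2) (p+1)| + r ^ (p+1) := h
          _ ≤ ((p:ℝ)+1) * r ^ (p+1) + r ^ (p+1) := by rw [← h3]; linarith
          _ = ((p:ℝ)+2) * r ^ (p+1) := by ring
      have hsub : p + 1 + 1 - 1 = p + 1 := rfl
      rw [hsub]
      push_cast
      linarith [goal']

lemma hb_pow_formula (τ β : ℝ) (u : ℕ → ℝ) (h0 : u 0 = 0) (h1 : u 1 = 1)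
    (hrec : ∀ n, u (n+2) = τ * u (n+1) - β * u n) :
    ∀ n : ℕ, (!![τ, -β; 1, 0] : Matrix (Fin 2) (Fin 2) ℝ) ^ (n+1) =
      !![u (n+2), -β * u (n+1); u (n+1), -β * u n] := by
  intro n
  induction n with
  | zero =>
    rw [pow_one]
    have e2 : u 2 = τ := by rw [hrec 0, h0, h1]; ring
    rw [e2, h0, h1]
    norm_num
  | succ m ih =>
    have e1 : u (m+3) = τ * u (m+2) - β * u (m+1) := hrec (m+1)
    have e0 : u (m+2) = τ * u (m+1) - β * u m := hrec m
    rw [pow_succ, ih, Matrix.mul_fin_two,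
      show m+1+2 = m+3 from rfl, show m+1+1 = m+2 from rfl, e1, e0]
    ext i j
    fin_cases i <;> fin_cases j <;> simp <;> ring

lemma hb_key_arith (nn p r ct : ℝ) (hn : 0 ≤ nn) (hp : 0 ≤ p) (hr : 0 ≤ r)
    (hct : 1 + 2*r + r^2 ≤ ct) :
    (nn+2) * (p*r) + r^2 * ((nn+1)*p) + (nn+1)*p + nn*(p*r)
      ≤ p*r + (nn+1)*ct*p := by
  have h1 : (0:ℝ) ≤ nn + 1 := by linarith
  have h2 : (0:ℝ) ≤ (nn+1) * p := mul_nonneg h1 hp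
  have h3 := mul_le_mul_of_nonneg_left hct h2
  have h4 : (0:ℝ) ≤ p * r := mul_nonneg hp hr
  nlinarith [h3, h4, mul_nonneg (mul_nonneg hn hp) hr]

set_option maxHeartbeats 1000000 in
/-- For `0 < L < U`, `κ = U/L`, heavy-ball parameters
`α̃ = 4/(√U+√L)²`, `β̃ = ((√U−√L)/(√U+√L))²`, `c̃ = 2 + 2β̃ + α̃`, any `λ ∈ [L, U]`
and any `k ∈ ℕ`, the matrix `B = [[1 + β̃ − α̃λ, −β̃], [1, 0]]` satisfies
`‖Bᵏ‖ ≤ ((√κ−1)/(√κ+1))ᵏ (1 + k c̃ (√κ+1)/(√κ−1))` in the spectral norm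
(operator norm induced by the Euclidean norm). -/
theorem heavyBall_block_power_norm_bound (L U : ℝ) (hL : 0 < L) (hLU : L < U)
    (κ : ℝ) (hκ : κ = U / L)
    (αt βt ct : ℝ)
    (hαt : αt = 4 / (Real.sqrt U + Real.sqrt L) ^ 2)
    (hβt : βt = ((Real.sqrt U - Real.sqrt L) / (Real.sqrt U + Real.sqrt L)) ^ 2)
    (hct : ct = 2 + 2 * βt + αt)
    (lam : ℝ) (hlam : lam ∈ Set.Icc L U)
    (B : Matrix (Fin 2) (Fin 2) ℝ) (hB : B = !![1 + βt - αt * lam, -βt; 1, 0])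
    (k : ℕ) :
    ‖Matrix.toEuclideanCLM (𝕜 := ℝ) (B ^ k)‖ ≤
      ((Real.sqrt κ - 1) / (Real.sqrt κ + 1)) ^ k *
        (1 + k * ct * (Real.sqrt κ + 1) / (Real.sqrt κ - 1)) := by
  obtain ⟨hlamL, hlamU⟩ := hlam
  have hU : 0 < U := hL.trans hLU
  have hsL : 0 < Real.sqrt L := Real.sqrt_pos.2 hL
  have hsU : 0 < Real.sqrt U := Real.sqrt_pos.2 hU
  have hsLU : Real.sqrt L < Real.sqrt U := Real.sqrt_lt_sqrt hL.le hLU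
  have hsum_pos : 0 < Real.sqrt U + Real.sqrt L := by linarith
  obtain ⟨s, hsdef⟩ : ∃ x : ℝ, x = Real.sqrt κ := ⟨_, rfl⟩
  rw [← hsdef]
  have hs : s = Real.sqrt U / Real.sqrt L := by
    rw [hsdef, hκ, Real.sqrt_div hU.le]
  have hs1 : 1 < s := by
    rw [hs, lt_div_iff₀ hsL]; linarith
  obtain ⟨r, hrdef⟩ : ∃ x : ℝ, x = (s - 1) / (s + 1) := ⟨_, rfl⟩
  rw [← hrdef]
  have hr_pos : 0 < r := by rw [hrdef]; exact div_pos (by linarith) (by linarith)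
  have hr_lt1 : r < 1 := by rw [hrdef, div_lt_one (by linarith)]; linarith
  have hr_eq : r = (Real.sqrt U - Real.sqrt L) / (Real.sqrt U + Real.sqrt L) := by
    rw [hrdef, hs]
    rw [div_eq_div_iff (by rw [hs] at hs1; positivity) (by positivity)]
    field_simp
  have hβ : βt = r ^ 2 := by rw [hβt, hr_eq]
  have hsqL : Real.sqrt L ^ 2 = L := Real.sq_sqrt hL.le
  have hsqU : Real.sqrt U ^ 2 = U := Real.sq_sqrt hU.le
  have hα_pos : 0 < αt := by rw [hαt]; positivity
  have h1mr : 1 - r = 2 * Real.sqrt L / (Real.sqrt U + Real.sqrt L) := by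
    rw [hr_eq]; field_simp; ring
  have h1pr : 1 + r = 2 * Real.sqrt U / (Real.sqrt U + Real.sqrt L) := by
    rw [hr_eq]; field_simp; ring
  have hαL : αt * L = (1 - r) ^ 2 := by
    rw [hαt, h1mr, div_pow, mul_pow, hsqL]; ring
  have hαU : αt * U = (1 + r) ^ 2 := by
    rw [hαt, h1pr, div_pow, mul_pow, hsqU]; ring
  obtain ⟨τ, hτdef⟩ : ∃ x : ℝ, x = 1 + βt - αt * lam := ⟨_, rfl⟩
  have hτabs : |τ| ≤ 2 * r := by
    rw [abs_le]
    have h1 : αt * lam ≤ αt * U := mul_le_mul_of_nonneg_left hlamU hα_pos.le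
    have h2 : αt * L ≤ αt * lam := mul_le_mul_of_nonneg_left hlamL hα_pos.le
    constructor
    · have e : (1 + r)^2 = 1 + 2*r + r^2 := by ring
      rw [hτdef, hβ]
      linarith [hαU, h1, e]
    · have e : (1 - r)^2 = 1 - 2*r + r^2 := by ring
      rw [hτdef, hβ]
      linarith [hαL, h2, e]
  have hB' : B = !![τ, -(r^2); 1, 0] := by rw [hB, hτdef, hβ]
  obtain ⟨u, hudef⟩ : ∃ v : ℕ → ℝ, v = hbU τ (r^2) := ⟨_, rfl⟩
  have hub : ∀ n : ℕ, |u n| ≤ n * r ^ (n - 1) := hudef ▸ hbU_abs_le τ r hr_pos hτabs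
  have hct_ge : (1 + r) ^ 2 ≤ ct := by
    have e1 : (1 + r)^2 = 1 + 2*r + r^2 := by ring
    have e2 : (0:ℝ) ≤ (1 - r)^2 := sq_nonneg _
    have e3 : (1 - r)^2 = 1 - 2*r + r^2 := by ring
    rw [hct, hβ]
    linarith
  cases k with
  | zero =>
    rw [pow_zero, _root_.map_one]
    simp only [pow_zero, Nat.cast_zero, zero_mul, zero_div, add_zero, one_mul]
    calc ‖(1 : EuclideanSpace ℝ (Fin 2) →L[ℝ] EuclideanSpace ℝ (Fin 2))‖ = 1 :=
          norm_one
      _ ≤ 1 := le_refl 1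
  | succ n =>
    have hform := hb_pow_formula τ (r^2) u (by rw [hudef]; rfl) (by rw [hudef]; rfl) (fun m => by rw [hudef]; rfl) n
    rw [hB', hform]
    have hbound := opNorm2_le_sum_abs (!![u (n+2), -(r^2) * u (n+1); u (n+1), -(r^2) * u n])
    have hent : |(!![u (n+2), -(r^2) * u (n+1); u (n+1), -(r^2) * u n] : Matrix (Fin 2) (Fin 2) ℝ) 0 0|
        + |(!![u (n+2), -(r^2) * u (n+1); u (n+1), -(r^2) * u n] : Matrix (Fin 2) (Fin 2) ℝ) 0 1|
        + |(!![u (n+2), -(r^2) * u (n+1); u (n+1), -(r^2) * u n] : Matrix (Fin 2) (Fin 2) ℝ) 1 0|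
        + |(!![u (n+2), -(r^2) * u (n+1); u (n+1), -(r^2) * u n] : Matrix (Fin 2) (Fin 2) ℝ) 1 1|
        = |u (n+2)| + r^2 * |u (n+1)| + |u (n+1)| + r^2 * |u n| := by
      simp [abs_mul, abs_of_nonneg (sq_nonneg r)]
      try ring
    rw [hent] at hbound
    -- individual bounds
    have b1 : |u (n+2)| ≤ ((n:ℝ)+2) * r ^ (n+1) := by
      have := hub (n+2); push_cast at this ⊢; simpa using this
    have b2 : |u (n+1)| ≤ ((n:ℝ)+1) * r ^ n := by
      have := hub (n+1); push_cast at this ⊢; simpa using this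
    have b3 : r^2 * |u n| ≤ (n:ℝ) * r ^ (n+1) := by
      cases n with
      | zero => simp [hudef, hbU]
      | succ m =>
        have := hub (m+1)
        have h' : |u (m+1)| ≤ ((m:ℝ)+1) * r ^ m := by push_cast at this ⊢; simpa using this
        have := mul_le_mul_of_nonneg_left h' (sq_nonneg r)
        calc r^2 * |u (m+1)| ≤ r^2 * (((m:ℝ)+1) * r ^ m) := this
          _ = ((m:ℝ)+1) * r ^ (m+1+1) := by rw [pow_succ, pow_succ]; ring
          _ ≤ ((m+1:ℕ):ℝ) * r ^ (m+1+1) := by push_cast; linarith [pow_nonneg hr_pos.le (m+1+1), mul_nonneg (Nat.cast_nonneg m : (0:ℝ) ≤ m) (pow_nonneg hr_pos.le (m+1+1))]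
    -- RHS simplification
    have h1 : r * ((s+1)/(s-1)) = 1 := by
      have hne1 : s - 1 ≠ 0 := ne_of_gt (by linarith)
      have hne2 : s + 1 ≠ 0 := ne_of_gt (by linarith)
      rw [hrdef]
      field_simp
    have hRHS : r^(n+1) * (1 + (((n:ℕ)+1 : ℕ):ℝ) * ct * (s+1)/(s-1))
        = r^n * r + ((n:ℝ)+1) * ct * r^n := by
      push_cast
      calc r^(n+1) * (1 + ((n:ℝ)+1) * ct * (s+1)/(s-1))
          = r^(n+1) + ((n:ℝ)+1) * ct * (r^n * (r * ((s+1)/(s-1)))) := by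
            rw [pow_succ]; ring
        _ = r^n * r + ((n:ℝ)+1) * ct * r^n := by rw [h1, pow_succ]; ring
    rw [hRHS]
    -- final arithmetic
    have hp : (0:ℝ) ≤ r ^ n := (pow_pos hr_pos n).le
    have hps : r ^ (n+1) = r^n * r := pow_succ r n
    have hctp : ((n:ℝ)+1) * r^n * (1 + 2*r + r^2) ≤ ((n:ℝ)+1) * r^n * ct := by
      apply mul_le_mul_of_nonneg_left _ (by positivity)
      have e1 : (1 + r)^2 = 1 + 2*r + r^2 := by ring
      linarith [hct_ge]
    have key : ((n:ℝ)+2) * r^(n+1) + r^2 * (((n:ℝ)+1) * r^n) + ((n:ℝ)+1) * r^n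
        + (n:ℝ) * r^(n+1) ≤ r^n * r + ((n:ℝ)+1) * ct * r^n := by
      rw [hps]
      have hct' : 1 + 2*r + r^2 ≤ ct := by
        have e1 : (1 + r)^2 = 1 + 2*r + r^2 := by ring
        linarith [hct_ge]
      have := hb_key_arith (n:ℝ) (r^n) r ct (Nat.cast_nonneg n) hp hr_pos.le hct'
      linarith [this]
    calc ‖Matrix.toEuclideanCLM (𝕜 := ℝ) (!![u (n+2), -(r^2) * u (n+1); u (n+1), -(r^2) * u n])‖
        ≤ |u (n+2)| + r^2 * |u (n+1)| + |u (n+1)| + r^2 * |u n| := hbound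
      _ ≤ ((n:ℝ)+2) * r^(n+1) + r^2 * (((n:ℝ)+1) * r^n) + ((n:ℝ)+1) * r^n
            + (n:ℝ) * r^(n+1) := by
          have := mul_le_mul_of_nonneg_left b2 (sq_nonneg r)
          linarith [b1, b3]
      _ ≤ r^n * r + ((n:ℝ)+1) * ct * r^n := key
end
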